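/- For 0 ≤ r ≤ n, the number of projections in D_r(PB_n) equals C(n,r)·a(n−r), where a(0) = a(1) = 1 and a(m) = a(m−1) + (m−1)·a(m−2) for m ≥ 2. -/

import Mathlib

/-!
Partial Brauer diagrams on `n` points are formalized as set partitions
(equivalence relations, i.e. `Setoid`s) of the vertex set
`{1,…,n} ∪ {1',…,n'}`, encoded as `Fin n ⊕ Fin n`
(`Sum.inl i` is the upper vertex `i`, `Sum.inr i` is the lower vertex `i'`),
all of whose blocks have size at most 2.  The product of two diagrams is
defined via connectivity (paths) in the product graph, and the involution `*`
by interchanging the two rows of vertices.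
-/

noncomputable section

open scoped Classical

/-- Vertices of a diagram on `n` points. -/
abbrev PBV (n : ℕ) := Fin n ⊕ Fin n

/-- A "diagram candidate": an arbitrary set partition of the vertices. -/
abbrev Dgm (n : ℕ) := Setoid (PBV n)

/-- The equivalence relation ("joined by a path") generated by a relation. -/
inductive RGen {V : Type*} (r : V → V → Prop) : V → V → Prop
  | rel {x y : V} : r x y → RGen r x y
  | refl (x : V) : RGen r x x
  | symm {x y : V} : RGen r x y → RGen r y x
  | trans {x y z : V} : RGen r x y → RGen r y z → RGen r x z

namespace Dgm

variable {n : ℕ}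

/-- Vertices of the product graph: top, middle and bottom rows. -/
abbrev V3 (n : ℕ) := Fin n ⊕ (Fin n ⊕ Fin n)

/-- The first factor occupies the top and middle rows of the product graph. -/
def topMid : PBV n → V3 n
  | Sum.inl i => Sum.inl i
  | Sum.inr i => Sum.inr (Sum.inl i)

/-- The second factor occupies the middle and bottom rows of the product graph. -/
def midBot : PBV n → V3 n
  | Sum.inl i => Sum.inr (Sum.inl i)
  | Sum.inr i => Sum.inr (Sum.inr i)

/-- The product diagram occupies the top and bottom rows of the product graph. -/
def topBot : PBV n → V3 n
  | Sum.inl i => Sum.inl i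
  | Sum.inr i => Sum.inr (Sum.inr i)

/-- The edges of the product graph `Γ(α, β)`. -/
def prodEdges (α β : Dgm n) (x y : V3 n) : Prop :=
  (∃ a b : PBV n, α.r a b ∧ x = topMid a ∧ y = topMid b) ∨
  (∃ a b : PBV n, β.r a b ∧ x = midBot a ∧ y = midBot b)

/-- The product of two diagrams: two vertices lie in the same block of `α β`
iff they are joined by a path in the product graph `Γ(α, β)`. -/
def pmul (α β : Dgm n) : Dgm n where
  r x y := RGen (prodEdges α β) (topBot x) (topBot y)
  iseqv := ⟨fun _ => RGen.refl _, fun h => h.symm, fun h₁ h₂ => h₁.trans h₂⟩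

/-- Interchanging the upper and the lower vertices. -/
def swapUD : PBV n → PBV n
  | Sum.inl i => Sum.inr i
  | Sum.inr i => Sum.inl i

/-- The involution `α ↦ α*` (reflection in a horizontal axis). -/
def pstar (α : Dgm n) : Dgm n := Setoid.comap swapUD α

/-- All blocks of `α` have size at most 2. -/
def IsPB (α : Dgm n) : Prop :=
  ∀ x y z : PBV n, α.r x y → α.r x z → x = y ∨ x = z ∨ y = z

/-- The partial Brauer monoid `PB_n` (as a set of diagrams). -/
def PBset (n : ℕ) : Set (Dgm n) := {α | IsPB α}

/-- The position of a vertex in the linear order `1 < 2 < ⋯ < n < n' < ⋯ < 1'`. -/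
def vpos : PBV n → ℕ
  | Sum.inl i => (i : ℕ)
  | Sum.inr i => 2 * n - 1 - (i : ℕ)

/-- Planarity: no two blocks cross in the order `1 < ⋯ < n < n' < ⋯ < 1'`. -/
def IsPlanar (α : Dgm n) : Prop :=
  ∀ a b c d : PBV n, α.r a b → α.r c d →
    vpos a < vpos c → vpos c < vpos b → vpos b < vpos d → False

/-- The Motzkin monoid `M_n` (as a set of diagrams). -/
def Mset (n : ℕ) : Set (Dgm n) := {α | IsPB α ∧ IsPlanar α}

/-- The domain of `α`: upper points lying in a transversal block. -/
def domSet (α : Dgm n) : Set (Fin n) := {i | ∃ j, α.r (Sum.inl i) (Sum.inr j)}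

/-- The codomain of `α`: lower points lying in a transversal block. -/
def codomSet (α : Dgm n) : Set (Fin n) := {i | ∃ j, α.r (Sum.inr i) (Sum.inl j)}

/-- The rank of a diagram: the number of its transversal blocks (for a diagram
with blocks of size at most 2, each transversal block contains exactly one
upper point, so this is the size of the domain). -/
def prank (α : Dgm n) : ℕ := (domSet α).ncard

/-- `α` is an idempotent. -/
def IsIdpt (α : Dgm n) : Prop := pmul α α = α

/-- `α` is a projection. -/
def IsProj (α : Dgm n) : Prop := pmul α α = α ∧ pstar α = α

/-- The D-class `D_r(PB_n)`. -/
def DPB (n r : ℕ) : Set (Dgm n) := {α | α ∈ PBset n ∧ prank α = r}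

/-- The ideal `I_r(PB_n)`. -/
def IPB (n r : ℕ) : Set (Dgm n) := {α | α ∈ PBset n ∧ prank α ≤ r}

/-- The D-class `D_r(M_n)`. -/
def DM (n r : ℕ) : Set (Dgm n) := {α | α ∈ Mset n ∧ prank α = r}

/-- The ideal `I_r(M_n)`. -/
def IM (n r : ℕ) : Set (Dgm n) := {α | α ∈ Mset n ∧ prank α ≤ r}

end Dgm

/-- Membership in the closure of a subset under a binary operation. -/
inductive MClo {γ : Type*} (m : γ → γ → γ) (X : Set γ) : γ → Prop
  | base {x : γ} : x ∈ X → MClo m X x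
  | mul {x y : γ} : MClo m X x → MClo m X y → MClo m X (m x y)

/-- The subsemigroup `⟨X⟩` generated by the subset `X`. -/
def genSet {γ : Type*} (m : γ → γ → γ) (X : Set γ) : Set γ := {x | MClo m X x}

/-- The rank of `T`: the least size of a generating set. -/
noncomputable def rnk {γ : Type*} (m : γ → γ → γ) (T : Set γ) : ℕ :=
  sInf {k | ∃ X : Finset γ, X.card = k ∧ genSet m ↑X = T}

/-- The idempotent rank of `T`: the least size of a generating set consisting
of idempotents. -/
noncomputable def idrnk {γ : Type*} (m : γ → γ → γ) (T : Set γ) : ℕ :=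
  sInf {k | ∃ X : Finset γ, X.card = k ∧ (∀ x ∈ X, m x x = x) ∧ genSet m ↑X = T}

/-- `T` is idempotent-generated. -/
def IdptGen {γ : Type*} (m : γ → γ → γ) (T : Set γ) : Prop :=
  genSet m {x ∈ T | m x x = x} = T

open Dgm
/-- `a(m)`: `a(0) = a(1) = 1` and `a(m) = a(m-1) + (m-1)·a(m-2)`. -/
def aSeq : ℕ → ℕ
  | 0 => 1
  | 1 => 1
  | (m + 2) => aSeq (m + 1) + (m + 1) * aSeq m

/-- The double factorial `k!!`, with the convention `k!! = 0` for even `k ≥ 0`. -/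
def oddDF : ℕ → ℕ
  | 0 => 0
  | 1 => 1
  | (k + 2) => (k + 2) * oddDF k

namespace Dgm

variable {n : ℕ}

/-- `{x}` is a singleton upper block of `α`. -/
def UpperSingleton (α : Dgm n) (x : Fin n) : Prop :=
  ∀ y : PBV n, α.r (Sum.inl x) y → y = Sum.inl x

/-- `{x'}` is a singleton lower block of `α`. -/
def LowerSingleton (α : Dgm n) (x : Fin n) : Prop :=
  ∀ y : PBV n, α.r (Sum.inr x) y → y = Sum.inr x

/-- The upper point `x` is nested: some upper block `{u,v}` has `u < x < v`. -/
def UpperNested (α : Dgm n) (x : Fin n) : Prop :=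
  ∃ u v : Fin n, α.r (Sum.inl u) (Sum.inl v) ∧ u < x ∧ x < v

/-- The lower point `x'` is nested: some lower block `{u',v'}` has `u < x < v`. -/
def LowerNested (α : Dgm n) (x : Fin n) : Prop :=
  ∃ u v : Fin n, α.r (Sum.inr u) (Sum.inr v) ∧ u < x ∧ x < v

/-- `α` has no unnested singleton (upper or lower) block. -/
def NoUnnestedSingleton (α : Dgm n) : Prop :=
  (∀ x, UpperSingleton α x → UpperNested α x) ∧
  (∀ x, LowerSingleton α x → LowerNested α x)

/-- A chain of `d` nested upper hooks of `α` around the upper point `x`: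
`u_{d-1} < ⋯ < u_0 < x < v_0 < ⋯ < v_{d-1}` with each `{u_i, v_i}` a block.
The singleton upper block `{x}` has nesting depth at most `k` iff there is no
such chain of length `k + 1`. -/
def UpperHookChain (α : Dgm n) (x : Fin n) (d : ℕ) : Prop :=
  ∃ u v : Fin d → Fin n,
    (∀ i, α.r (Sum.inl (u i)) (Sum.inl (v i))) ∧
    (∀ i, u i < x ∧ x < v i) ∧ StrictAnti u ∧ StrictMono v

/-- A chain of `d` nested lower hooks of `α` around the lower point `x'`. -/
def LowerHookChain (α : Dgm n) (x : Fin n) (d : ℕ) : Prop :=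
  ∃ u v : Fin d → Fin n,
    (∀ i, α.r (Sum.inr (u i)) (Sum.inr (v i))) ∧
    (∀ i, u i < x ∧ x < v i) ∧ StrictAnti u ∧ StrictMono v

/-- `λ_A`: the planar diagram joining the `k`-th smallest element of `A`
(upper) to `k` (lower), all other blocks being singletons. -/
def lamd (A : Finset (Fin n)) : Dgm n :=
  Setoid.ker (fun x : PBV n =>
    match x with
    | Sum.inl a =>
        if ha : a ∈ A then
          (Sum.inr (((A.orderIsoOfFin rfl).symm ⟨a, ha⟩ : Fin A.card) : ℕ) : ℕ ⊕ ℕ)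
        else Sum.inl (a : ℕ)
    | Sum.inr j => Sum.inr (j : ℕ))

/-- `ρ_A = (λ_A)*`. -/
def rhod (A : Finset (Fin n)) : Dgm n := pstar (lamd A)

/-- The diagram whose 2-element blocks are exactly `{i, (π i)'}` for `i < r`. -/
def permDgm (n r : ℕ) (π : Equiv.Perm (Fin r)) : Dgm n :=
  Setoid.ker (fun x : PBV n =>
    match x with
    | Sum.inl a =>
        if h : (a : ℕ) < r then (Sum.inr ((π ⟨(a : ℕ), h⟩ : Fin r) : ℕ) : ℕ ⊕ ℕ)
        else Sum.inl (a : ℕ)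
    | Sum.inr j => Sum.inr (j : ℕ))

/-- The set `S_{[r]} ⊆ PB_n`. -/
def SBr (n r : ℕ) : Set (Dgm n) := {γ | ∃ π : Equiv.Perm (Fin r), γ = permDgm n r π}

/-- The domain of `α` as a `Finset`. -/
def domFinset (α : Dgm n) : Finset (Fin n) :=
  Finset.univ.filter fun i => i ∈ domSet α

/-- The codomain of `α` as a `Finset`. -/
def codomFinset (α : Dgm n) : Finset (Fin n) :=
  Finset.univ.filter fun i => i ∈ codomSet α

/-- `A ⊆ {1,…,n}` is cosparse: its complement contains no two consecutive
elements. -/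
def CosparseS (A : Set (Fin n)) : Prop :=
  ∀ i j : Fin n, i ∉ A → j ∉ A → (j : ℕ) ≠ (i : ℕ) + 1

/-- `id_A`: the diagram with blocks `{a, a'}` for `a ∈ A`, all other blocks
being singletons. -/
def idd (A : Set (Fin n)) : Dgm n :=
  Setoid.ker (fun x : PBV n =>
    match x with
    | Sum.inl a => if a ∈ A then (Sum.inr (a : ℕ) : ℕ ⊕ ℕ) else Sum.inl (a : ℕ)
    | Sum.inr j => Sum.inr (j : ℕ))

end Dgm
namespace PBProof
open Dgm

variable {n : ℕ}

/-- Labels for blocks of the projection diagram. -/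
abbrev L (n : ℕ) := (PBV n) ⊕ (Fin n ⊕ (Fin n ⊕ Fin n))

def pf (T : Finset (Fin n)) (g : Fin n → Fin n) : PBV n → L n
  | Sum.inl i =>
      if i ∈ T then Sum.inr (Sum.inl i)
      else if g i = i then Sum.inl (Sum.inl i)
      else Sum.inr (Sum.inr (Sum.inl (min i (g i))))
  | Sum.inr i =>
      if i ∈ T then Sum.inr (Sum.inl i)
      else if g i = i then Sum.inl (Sum.inr i)
      else Sum.inr (Sum.inr (Sum.inr (min i (g i))))

def projDgm (T : Finset (Fin n)) (g : Fin n → Fin n) : Dgm n := Setoid.ker (pf T g)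

lemma projDgm_r {T : Finset (Fin n)} {g : Fin n → Fin n} {x y : PBV n} :
    (projDgm T g).r x y ↔ pf T g x = pf T g y := Iff.rfl

section charact

variable {T : Finset (Fin n)} {g : Fin n → Fin n}
  (hg : ∀ i, g (g i) = i) (hT : ∀ i ∈ T, g i = i)

include hg in
lemma min_pair {i j : Fin n} (h : min j (g j) = min i (g i)) : j = i ∨ j = g i := by
  rcases min_choice j (g j) with h1 | h1 <;> rcases min_choice i (g i) with h2 | h2 <;>
    rw [h1, h2] at h
  · exact Or.inl h
  · exact Or.inr h
  · right; have := congrArg g h; rwa [hg] at this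
  · left; have := congrArg g h; rwa [hg, hg] at this

include hg hT in
lemma notmem_of_ne {i : Fin n} (hgi : g i ≠ i) : g i ∉ T :=
  fun hmem => hgi (by have := hT _ hmem; rw [← hg i]; rw [this]; exact this)

include hg hT in
lemma pf_inl_inl {i j : Fin n} :
    pf T g (Sum.inl i) = pf T g (Sum.inl j) ↔
      j = i ∨ (i ∉ T ∧ g i ≠ i ∧ j = g i) := by
  constructor
  · intro h
    simp only [pf] at h
    by_cases hiT : i ∈ T <;> by_cases hjT : j ∈ T <;>
        by_cases hgi : g i = i <;> by_cases hgj : g j = j <;>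
        simp only [hiT, hjT, hgi, hgj, if_true, if_false, Sum.inr.injEq, Sum.inl.injEq,
          reduceCtorEq, Fin.mk.injEq] at h
    all_goals first
      | exact Or.inl h.symm
      | (rcases min_pair hg h.symm with h' | h'
         · exact Or.inl h'
         · exact Or.inr ⟨hiT, hgi, h'⟩)
  · rintro (rfl | ⟨hiT, hgi, rfl⟩)
    · rfl
    · simp only [pf, if_neg hiT, if_neg hgi]
      have hggi : g (g i) ≠ g i := by rw [hg]; exact fun h => hgi h.symm
      rw [if_neg (notmem_of_ne hg hT hgi), if_neg hggi, hg, min_comm]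

include hg hT in
lemma pf_inr_inr {i j : Fin n} :
    pf T g (Sum.inr i) = pf T g (Sum.inr j) ↔
      j = i ∨ (i ∉ T ∧ g i ≠ i ∧ j = g i) := by
  constructor
  · intro h
    simp only [pf] at h
    by_cases hiT : i ∈ T <;> by_cases hjT : j ∈ T <;>
        by_cases hgi : g i = i <;> by_cases hgj : g j = j <;>
        simp only [hiT, hjT, hgi, hgj, if_true, if_false, Sum.inr.injEq, Sum.inl.injEq,
          reduceCtorEq, Fin.mk.injEq] at h
    all_goals first
      | exact Or.inl h.symm
      | (rcases min_pair hg h.symm with h' | h'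
         · exact Or.inl h'
         · exact Or.inr ⟨hiT, hgi, h'⟩)
  · rintro (rfl | ⟨hiT, hgi, rfl⟩)
    · rfl
    · simp only [pf, if_neg hiT, if_neg hgi]
      have hggi : g (g i) ≠ g i := by rw [hg]; exact fun h => hgi h.symm
      rw [if_neg (notmem_of_ne hg hT hgi), if_neg hggi, hg, min_comm]

lemma pf_inl_inr {i j : Fin n} :
    pf T g (Sum.inl i) = pf T g (Sum.inr j) ↔ i ∈ T ∧ j = i := by
  constructor
  · intro h
    simp only [pf] at h
    by_cases hiT : i ∈ T <;> by_cases hjT : j ∈ T <;>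
        by_cases hgi : g i = i <;> by_cases hgj : g j = j <;>
        simp only [hiT, hjT, hgi, hgj, if_true, if_false, Sum.inr.injEq, Sum.inl.injEq,
          reduceCtorEq, Fin.mk.injEq] at h
    all_goals exact ⟨hiT, h.symm⟩
  · rintro ⟨hiT, rfl⟩
    simp only [pf, if_pos hiT]

include hg hT in
lemma pf_symm_lemma {i j : Fin n} (h : pf T g (Sum.inr i) = pf T g (Sum.inr j)) :
    pf T g (Sum.inl i) = pf T g (Sum.inl j) := by
  rw [pf_inr_inr hg hT] at h
  rw [pf_inl_inl hg hT]; exact h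

end charact

end PBProof
namespace PBProof
open Dgm

variable {n : ℕ} {T : Finset (Fin n)} {g : Fin n → Fin n}

section props
variable (hg : ∀ i, g (g i) = i) (hT : ∀ i ∈ T, g i = i)

lemma pf_inr_inl {i j : Fin n} :
    pf T g (Sum.inr i) = pf T g (Sum.inl j) ↔ j ∈ T ∧ i = j := by
  rw [eq_comm, pf_inl_inr]

include hg hT in
lemma projDgm_isPB : IsPB (projDgm T g) := by
  rintro (i | i) (j | j) (k | k) h1 h2
  · rw [projDgm_r, pf_inl_inl hg hT] at h1 h2
    rcases h1 with rfl | ⟨_, _, rfl⟩ <;> rcases h2 with rfl | ⟨_, _, rfl⟩ <;> simp_all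
  · rw [projDgm_r, pf_inl_inl hg hT] at h1
    rw [projDgm_r, pf_inl_inr] at h2
    obtain ⟨hiT, rfl⟩ := h2
    rcases h1 with rfl | ⟨h, _, _⟩ <;> simp_all
  · rw [projDgm_r, pf_inl_inr] at h1
    rw [projDgm_r, pf_inl_inl hg hT] at h2
    obtain ⟨hiT, rfl⟩ := h1
    rcases h2 with rfl | ⟨h, _, _⟩ <;> simp_all
  · rw [projDgm_r, pf_inl_inr] at h1 h2
    obtain ⟨hiT, rfl⟩ := h1; obtain ⟨-, rfl⟩ := h2; simp
  · rw [projDgm_r, pf_inr_inl] at h1 h2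
    obtain ⟨hjT, rfl⟩ := h1; obtain ⟨-, h⟩ := h2; simp [h]
  · rw [projDgm_r, pf_inr_inl] at h1
    rw [projDgm_r, pf_inr_inr hg hT] at h2
    obtain ⟨hjT, rfl⟩ := h1
    rcases h2 with rfl | ⟨h, _, _⟩ <;> simp_all
  · rw [projDgm_r, pf_inr_inr hg hT] at h1
    rw [projDgm_r, pf_inr_inl] at h2
    obtain ⟨hkT, rfl⟩ := h2
    rcases h1 with rfl | ⟨h, _, _⟩ <;> simp_all
  · rw [projDgm_r, pf_inr_inr hg hT] at h1 h2
    rcases h1 with rfl | ⟨_, _, rfl⟩ <;> rcases h2 with rfl | ⟨_, _, rfl⟩ <;> simp_all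

/-- Flip of labels, matching `swapUD`. -/
def flipL : L n → L n
  | Sum.inl (Sum.inl i) => Sum.inl (Sum.inr i)
  | Sum.inl (Sum.inr i) => Sum.inl (Sum.inl i)
  | Sum.inr (Sum.inl i) => Sum.inr (Sum.inl i)
  | Sum.inr (Sum.inr (Sum.inl m)) => Sum.inr (Sum.inr (Sum.inr m))
  | Sum.inr (Sum.inr (Sum.inr m)) => Sum.inr (Sum.inr (Sum.inl m))

lemma flipL_flipL (l : L n) : flipL (flipL l) = l := by
  rcases l with (i | i) | (i | (m | m)) <;> rfl

lemma pf_swapUD (x : PBV n) : pf T g (swapUD x) = flipL (pf T g x) := by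
  rcases x with i | i <;> simp only [pf, swapUD] <;> split_ifs <;> rfl

lemma pstar_projDgm : pstar (projDgm T g) = projDgm T g := by
  apply Setoid.ext
  intro x y
  show pf T g (swapUD x) = pf T g (swapUD y) ↔ pf T g x = pf T g y
  rw [pf_swapUD, pf_swapUD]
  constructor
  · intro h
    have := congrArg flipL h
    rwa [flipL_flipL, flipL_flipL] at this
  · intro h; rw [h]

lemma domSet_projDgm : domSet (projDgm T g) = ↑T := by
  ext i
  simp only [domSet, Set.mem_setOf_eq, Finset.coe_sort_coe, Finset.mem_coe]
  constructor
  · rintro ⟨j, hj⟩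
    exact (pf_inl_inr.mp hj).1
  · intro hiT
    exact ⟨i, pf_inl_inr.mpr ⟨hiT, rfl⟩⟩

lemma prank_projDgm : prank (projDgm T g) = T.card := by
  rw [prank, domSet_projDgm, Set.ncard_coe_finset]

/-- The invariant on the product graph. -/
def FInv (T : Finset (Fin n)) (g : Fin n → Fin n) : V3 n → L n
  | Sum.inl a => pf T g (Sum.inl a)
  | Sum.inr (Sum.inl i) => pf T g (Sum.inl i)
  | Sum.inr (Sum.inr i) => pf T g (Sum.inr i)

lemma FInv_topBot (x : PBV n) : FInv T g (topBot x) = pf T g x := by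
  rcases x with i | i <;> rfl

include hg hT in
lemma FInv_edge {x y : V3 n}
    (h : prodEdges (projDgm T g) (projDgm T g) x y) : FInv T g x = FInv T g y := by
  rcases h with ⟨a, b, hab, rfl, rfl⟩ | ⟨a, b, hab, rfl, rfl⟩
  · rcases a with i | i <;> rcases b with j | j
    · exact hab
    · obtain ⟨hiT, rfl⟩ := pf_inl_inr.mp hab
      rfl
    · obtain ⟨hjT, rfl⟩ := pf_inr_inl.mp hab
      rfl
    · exact pf_symm_lemma hg hT hab
  · rcases a with i | i <;> rcases b with j | j <;> exact hab

include hg hT in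
lemma pmul_projDgm : pmul (projDgm T g) (projDgm T g) = projDgm T g := by
  apply Setoid.ext
  intro x y
  show RGen _ (topBot x) (topBot y) ↔ pf T g x = pf T g y
  constructor
  · intro h
    have key : ∀ u v : V3 n, RGen (prodEdges (projDgm T g) (projDgm T g)) u v →
        FInv T g u = FInv T g v := by
      intro u v h
      induction h with
      | rel h => exact FInv_edge hg hT h
      | refl => rfl
      | symm _ ih => exact ih.symm
      | trans _ _ ih1 ih2 => exact ih1.trans ih2
    have := key _ _ h
    rwa [FInv_topBot, FInv_topBot] at this
  · intro h
    have path : ∀ i : Fin n, i ∈ T →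
        RGen (prodEdges (projDgm T g) (projDgm T g)) (topBot (Sum.inl i))
          (topBot (Sum.inr i)) := by
      intro i hiT
      have hii : pf T g (Sum.inl i) = pf T g (Sum.inr i) := pf_inl_inr.mpr ⟨hiT, rfl⟩
      refine RGen.trans (RGen.rel (Or.inl ⟨Sum.inl i, Sum.inr i, hii, rfl, rfl⟩))
        (RGen.rel (Or.inr ⟨Sum.inl i, Sum.inr i, hii, rfl, rfl⟩))
    rcases x with i | i <;> rcases y with j | j
    · exact RGen.rel (Or.inl ⟨Sum.inl i, Sum.inl j, h, rfl, rfl⟩)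
    · obtain ⟨hiT, rfl⟩ := pf_inl_inr.mp h
      exact path _ hiT
    · obtain ⟨hjT, rfl⟩ := pf_inr_inl.mp h
      exact (path _ hjT).symm
    · exact RGen.rel (Or.inr ⟨Sum.inr i, Sum.inr j, h, rfl, rfl⟩)

include hg hT in
lemma projDgm_mem (hcard : T.card = r) :
    projDgm T g ∈ {α : Dgm n | α ∈ DPB n r ∧ IsProj α} :=
  ⟨⟨projDgm_isPB hg hT, by rw [prank_projDgm, hcard]⟩,
    pmul_projDgm hg hT, pstar_projDgm⟩

end props

end PBProof
namespace PBProof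
open Dgm

variable {n : ℕ}

section conv
variable {α : Dgm n} (hPB : IsPB α) (hmul : pmul α α = α) (hstar : pstar α = α)

include hstar in
lemma swap_r {x y : PBV n} : α.r (swapUD x) (swapUD y) ↔ α.r x y := by
  conv_rhs => rw [← hstar]
  exact Iff.rfl

include hPB hmul hstar in
lemma trans_diag {i j : Fin n} (h : α.r (Sum.inl i) (Sum.inr j)) : j = i := by
  have h2 : α.r (Sum.inl j) (Sum.inr i) := by
    have := α.iseqv.symm h
    exact (swap_r hstar (x := Sum.inr j) (y := Sum.inl i)).mpr this
  have h3 : (pmul α α).r (Sum.inl i) (Sum.inr i) :=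
    RGen.trans (RGen.rel (Or.inl ⟨Sum.inl i, Sum.inr j, h, rfl, rfl⟩))
      (RGen.rel (Or.inr ⟨Sum.inl j, Sum.inr i, h2, rfl, rfl⟩))
  rw [hmul] at h3
  rcases hPB _ _ _ h h3 with hc | hc | hc
  · exact absurd hc (by simp)
  · exact absurd hc (by simp)
  · exact Sum.inr.inj hc

/-- The transversal set of `α`. -/
def Tof (α : Dgm n) : Finset (Fin n) :=
  Finset.univ.filter fun i => α.r (Sum.inl i) (Sum.inr i)

/-- The upper matching of `α`. -/
def gof (α : Dgm n) : Fin n → Fin n := fun i =>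
  if h : ∃ j, j ≠ i ∧ α.r (Sum.inl i) (Sum.inl j) then h.choose else i

lemma gof_rel (i : Fin n) : α.r (Sum.inl i) (Sum.inl (gof α i)) := by
  unfold gof
  split_ifs with h
  · exact h.choose_spec.2
  · exact α.iseqv.refl _

include hPB in
lemma gof_eq {i j : Fin n} (hj : j ≠ i) (h : α.r (Sum.inl i) (Sum.inl j)) :
    gof α i = j := by
  have hex : ∃ k, k ≠ i ∧ α.r (Sum.inl i) (Sum.inl k) := ⟨j, hj, h⟩
  have hspec := hex.choose_spec
  have : gof α i = hex.choose := dif_pos hex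
  rw [this]
  rcases hPB _ _ _ h hspec.2 with hc | hc | hc
  · exact absurd (Sum.inl.inj hc).symm hj
  · exact absurd (Sum.inl.inj hc).symm hspec.1
  · exact (Sum.inl.inj hc).symm

include hPB in
lemma gof_invol (i : Fin n) : gof α (gof α i) = i := by
  by_cases h : gof α i = i
  · rw [h, h]
  · exact gof_eq hPB (fun hc => h hc.symm) (α.iseqv.symm (gof_rel i))

include hPB in
lemma gof_fix {i : Fin n} (hi : i ∈ Tof α) : gof α i = i := by
  have hT : α.r (Sum.inl i) (Sum.inr i) := by
    simpa [Tof] using hi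
  by_contra hgi
  have hrel := gof_rel (α := α) i
  rcases hPB _ _ _ hT hrel with hc | hc | hc
  · exact absurd hc (by simp)
  · exact hgi (Sum.inl.inj hc).symm
  · exact absurd hc (by simp)

include hPB in
lemma r_ll {i j : Fin n} :
    α.r (Sum.inl i) (Sum.inl j) ↔ j = i ∨ (gof α i ≠ i ∧ j = gof α i) := by
  constructor
  · intro h
    by_cases hj : j = i
    · exact Or.inl hj
    · have := gof_eq hPB hj h
      exact Or.inr ⟨this ▸ hj, this.symm⟩
  · rintro (rfl | ⟨_, rfl⟩)
    · exact α.iseqv.refl _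
    · exact gof_rel i

include hPB hstar in
lemma r_rr {i j : Fin n} :
    α.r (Sum.inr i) (Sum.inr j) ↔ j = i ∨ (gof α i ≠ i ∧ j = gof α i) := by
  rw [show (Sum.inr i : PBV n) = swapUD (Sum.inl i) from rfl,
    show (Sum.inr j : PBV n) = swapUD (Sum.inl j) from rfl, swap_r hstar]
  exact r_ll hPB

include hPB hmul hstar in
lemma r_lr {i j : Fin n} :
    α.r (Sum.inl i) (Sum.inr j) ↔ i ∈ Tof α ∧ j = i := by
  constructor
  · intro h
    obtain rfl := trans_diag hPB hmul hstar h
    exact ⟨by simpa [Tof] using h, rfl⟩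
  · rintro ⟨hi, rfl⟩
    simpa [Tof] using hi

include hPB hmul hstar in
lemma r_rl {i j : Fin n} :
    α.r (Sum.inr i) (Sum.inl j) ↔ j ∈ Tof α ∧ i = j := by
  constructor
  · intro h
    exact (r_lr hPB hmul hstar).mp (α.iseqv.symm h)
  · intro h
    exact α.iseqv.symm ((r_lr hPB hmul hstar).mpr h)

include hPB hmul hstar in
lemma proj_eq_projDgm : α = projDgm (Tof α) (gof α) := by
  have hg : ∀ i, gof α (gof α i) = i := gof_invol hPB
  have hT : ∀ i ∈ Tof α, gof α i = i := fun i hi => gof_fix hPB hi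
  have hnT : ∀ i : Fin n, gof α i ≠ i → i ∉ Tof α := fun i hgi hiT => hgi (hT i hiT)
  apply Setoid.ext
  rintro (i | i) (j | j)
  · rw [show (projDgm (Tof α) (gof α)).r _ _ ↔ _ from pf_inl_inl hg hT, r_ll hPB]
    constructor
    · rintro (rfl | ⟨h1, h2⟩)
      · exact Or.inl rfl
      · exact Or.inr ⟨hnT i h1, h1, h2⟩
    · rintro (rfl | ⟨_, h1, h2⟩)
      · exact Or.inl rfl
      · exact Or.inr ⟨h1, h2⟩
  · rw [show (projDgm (Tof α) (gof α)).r _ _ ↔ _ from pf_inl_inr, r_lr hPB hmul hstar]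
  · rw [show (projDgm (Tof α) (gof α)).r _ _ ↔ _ from pf_inr_inl, r_rl hPB hmul hstar]
  · rw [show (projDgm (Tof α) (gof α)).r _ _ ↔ _ from pf_inr_inr hg hT, r_rr hPB hstar]
    constructor
    · rintro (rfl | ⟨h1, h2⟩)
      · exact Or.inl rfl
      · exact Or.inr ⟨hnT i h1, h1, h2⟩
    · rintro (rfl | ⟨_, h1, h2⟩)
      · exact Or.inl rfl
      · exact Or.inr ⟨h1, h2⟩

include hPB hmul hstar in
lemma domSet_eq_Tof : domSet α = ↑(Tof α) := by
  ext i
  simp only [domSet, Set.mem_setOf_eq, Finset.coe_sort_coe, Finset.mem_coe]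
  constructor
  · rintro ⟨j, hj⟩
    obtain rfl := trans_diag hPB hmul hstar hj
    simpa [Tof] using hj
  · intro hi
    exact ⟨i, by simpa [Tof] using hi⟩

end conv

end PBProof
namespace PBProof
open Dgm Finset

variable {n : ℕ}

/-- Involutions of `Fin n` supported on `s`. -/
def JF (s : Finset (Fin n)) : Finset (Fin n → Fin n) :=
  Finset.univ.filter fun g => (∀ x, g (g x) = x) ∧ ∀ x ∉ s, g x = x

lemma mem_JF {s : Finset (Fin n)} {g : Fin n → Fin n} :
    g ∈ JF s ↔ (∀ x, g (g x) = x) ∧ ∀ x ∉ s, g x = x := by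
  simp [JF]

lemma aSeq_rec {m : ℕ} (hm : 1 ≤ m) :
    aSeq m = aSeq (m - 1) + (m - 1) * aSeq (m - 2) := by
  match m, hm with
  | 1, _ => simp [aSeq]
  | (k + 2), _ => rfl

lemma JF_map_mem {s : Finset (Fin n)} {g : Fin n → Fin n} (hg : g ∈ JF s)
    {x : Fin n} (hx : x ∈ s) : g x ∈ s := by
  rw [mem_JF] at hg
  by_contra hgx
  have h := hg.2 _ hgx
  rw [hg.1 x] at h
  rw [← h] at hgx
  exact hgx hx

lemma JF_card : ∀ (m : ℕ) (s : Finset (Fin n)), s.card = m → (JF s).card = aSeq m := by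
  intro m
  induction m using Nat.strong_induction_on with
  | _ m ih =>
    intro s hs
    rcases Nat.eq_zero_or_pos m with rfl | hm
    · obtain rfl : s = ∅ := Finset.card_eq_zero.mp hs
      have he : JF (∅ : Finset (Fin n)) = {id} := by
        ext g
        rw [mem_JF, Finset.mem_singleton]
        constructor
        · rintro ⟨-, h2⟩
          funext x; exact h2 x (by simp)
        · rintro rfl
          exact ⟨fun x => rfl, fun x _ => rfl⟩
      rw [he]; rfl
    · obtain ⟨a, ha⟩ := Finset.card_pos.mp (hs ▸ hm)
      rw [← Finset.card_filter_add_card_filter_not (s := JF s)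
        (p := fun g => g a = a)]
      have h1 : (JF s).filter (fun g => g a = a) = JF (s.erase a) := by
        ext g
        rw [Finset.mem_filter, mem_JF, mem_JF]
        constructor
        · rintro ⟨⟨hi, hsup⟩, hga⟩
          refine ⟨hi, fun x hx => ?_⟩
          by_cases hxa : x = a
          · subst hxa; exact hga
          · exact hsup x (fun hxs => hx (Finset.mem_erase.mpr ⟨hxa, hxs⟩))
        · rintro ⟨hi, hsup⟩
          exact ⟨⟨hi, fun x hxs => hsup x (fun hxe => hxs (Finset.mem_erase.mp hxe).2)⟩,
            hsup a (fun hxe => (Finset.mem_erase.mp hxe).1 rfl)⟩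
      have e1 : ((JF s).filter (fun g => g a = a)).card = aSeq (m - 1) := by
        rw [h1]
        exact ih (m - 1) (Nat.sub_lt hm one_pos) _ (by rw [Finset.card_erase_of_mem ha, hs])
      have e2 : ((JF s).filter (fun g => ¬g a = a)).card = (m - 1) * aSeq (m - 2) := by
        rw [Finset.card_eq_sum_card_fiberwise (f := fun g => g a) (t := s.erase a)
          (fun g hg => by
            rw [Finset.mem_coe, Finset.mem_filter] at hg
            exact Finset.mem_erase.mpr ⟨hg.2, JF_map_mem hg.1 ha⟩)]
        have hfib : ∀ b ∈ s.erase a,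
            (((JF s).filter (fun g => ¬g a = a)).filter (fun g => g a = b)).card
              = aSeq (m - 2) := by
          intro b hb
          obtain ⟨hba, hbs⟩ := Finset.mem_erase.mp hb
          have hsimp : ((JF s).filter (fun g => ¬g a = a)).filter (fun g => g a = b)
              = (JF s).filter (fun g => g a = b) := by
            ext g
            simp only [Finset.mem_filter, and_assoc]
            constructor
            · rintro ⟨h1, h2, h3⟩; exact ⟨h1, h3⟩
            · rintro ⟨h1, h3⟩
              exact ⟨h1, fun hc => hba (by rw [hc] at h3; exact h3.symm), h3⟩
          rw [hsimp]
          have hcard : ((s.erase a).erase b).card = m - 2 := by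
            rw [Finset.card_erase_of_mem hb, Finset.card_erase_of_mem ha, hs, Nat.sub_sub]
          have hbij : ((JF s).filter (fun g => g a = b)).card
              = (JF ((s.erase a).erase b)).card := by
            apply Finset.card_nbij'
              (i := fun g x => if x = a ∨ x = b then x else g x)
              (j := fun h x => if x = a then b else if x = b then a else h x)
            · intro g hg
              rw [Finset.mem_coe, Finset.mem_filter, mem_JF] at hg
              obtain ⟨⟨hinv, hsup⟩, hgab⟩ := hg
              have hgb : g b = a := by
                have h2 := hinv a; rw [hgab] at h2; exact h2
              rw [Finset.mem_coe, mem_JF]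
              constructor
              · intro x
                by_cases hxa : x = a
                · subst hxa; simp
                · by_cases hxb : x = b
                  · subst hxb; simp
                  · have hgxa : g x ≠ a := fun hc => by
                      have h2 : g (g x) = g a := by rw [hc]
                      rw [hinv, hgab] at h2
                      exact hxb h2
                    have hgxb : g x ≠ b := fun hc => by
                      have h2 : g (g x) = g b := by rw [hc]
                      rw [hinv, hgb] at h2
                      exact hxa h2
                    simp only [if_neg (not_or.mpr ⟨hxa, hxb⟩),
                      if_neg (not_or.mpr ⟨hgxa, hgxb⟩), hinv]
              · intro x hx
                by_cases hxa : x = a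
                · subst hxa; simp
                · by_cases hxb : x = b
                  · subst hxb; simp
                  · simp only [if_neg (not_or.mpr ⟨hxa, hxb⟩)]
                    exact hsup x fun hxs => hx (Finset.mem_erase.mpr ⟨hxb,
                      Finset.mem_erase.mpr ⟨hxa, hxs⟩⟩)
            · intro h hh
              rw [Finset.mem_coe, mem_JF] at hh
              obtain ⟨hinv, hsup⟩ := hh
              have hha : h a = a := hsup a (fun hc =>
                (Finset.mem_erase.mp (Finset.mem_erase.mp hc).2).1 rfl)
              have hhb : h b = b := hsup b (fun hc =>
                (Finset.mem_erase.mp hc).1 rfl)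
              rw [Finset.mem_coe, Finset.mem_filter, mem_JF]
              refine ⟨⟨?_, ?_⟩, by simp⟩
              · intro x
                by_cases hxa : x = a
                · subst hxa; simp [hba]
                · by_cases hxb : x = b
                  · subst hxb; simp [hba]
                  · have h1 : h x ≠ a := fun hc => hxa (by rw [← hinv x, hc, hha])
                    have h2 : h x ≠ b := fun hc => hxb (by rw [← hinv x, hc, hhb])
                    simp only [if_neg hxa, if_neg hxb, if_neg h1, if_neg h2, hinv]
              · intro x hxs
                have hxa : x ≠ a := fun hc => hxs (hc ▸ ha)
                have hxb : x ≠ b := fun hc => hxs (hc ▸ hbs)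
                simp only [if_neg hxa, if_neg hxb]
                exact hsup x fun hc =>
                  hxs (Finset.mem_erase.mp (Finset.mem_erase.mp hc).2).2
            · intro g hg
              rw [Finset.mem_coe, Finset.mem_filter, mem_JF] at hg
              obtain ⟨⟨hinv, hsup⟩, hgab⟩ := hg
              have hgb : g b = a := by
                have h2 := hinv a; rw [hgab] at h2; exact h2
              funext x
              by_cases hxa : x = a
              · subst hxa; simp [hgab]
              · by_cases hxb : x = b
                · subst hxb; simp [hba, hgb]
                · simp only [if_neg hxa, if_neg hxb,
                    if_neg (not_or.mpr ⟨hxa, hxb⟩)]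
            · intro h hh
              rw [Finset.mem_coe, mem_JF] at hh
              obtain ⟨hinv, hsup⟩ := hh
              have hha : h a = a := hsup a (fun hc =>
                (Finset.mem_erase.mp (Finset.mem_erase.mp hc).2).1 rfl)
              have hhb : h b = b := hsup b (fun hc =>
                (Finset.mem_erase.mp hc).1 rfl)
              funext x
              by_cases hxa : x = a
              · subst hxa; simp [hha]
              · by_cases hxb : x = b
                · subst hxb; simp [hhb, hba]
                · simp only [if_neg (not_or.mpr ⟨hxa, hxb⟩), if_neg hxa, if_neg hxb]
          rw [hbij]
          exact ih (m - 2) (Nat.sub_lt hm two_pos) _ hcard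
        rw [Finset.sum_congr rfl hfib, Finset.sum_const, Finset.card_erase_of_mem ha,
          hs, smul_eq_mul]
      rw [e1, e2, ← aSeq_rec hm]

end PBProof
namespace PBProof
open Dgm Finset

variable {n : ℕ}

/-- Parameters of projections: a transversal set and an involution. -/
def QF (n r : ℕ) : Finset ((Finset (Fin n)) × (Fin n → Fin n)) :=
  Finset.univ.filter fun p =>
    p.1.card = r ∧ (∀ i, p.2 (p.2 i) = i) ∧ ∀ i ∈ p.1, p.2 i = i

lemma mem_QF {r : ℕ} {p : (Finset (Fin n)) × (Fin n → Fin n)} :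
    p ∈ QF n r ↔ p.1.card = r ∧ (∀ i, p.2 (p.2 i) = i) ∧ ∀ i ∈ p.1, p.2 i = i := by
  simp [QF]

lemma S_eq (r : ℕ) :
    {α : Dgm n | α ∈ DPB n r ∧ IsProj α} =
      (fun p : (Finset (Fin n)) × (Fin n → Fin n) => projDgm p.1 p.2) '' ↑(QF n r) := by
  ext α
  constructor
  · rintro ⟨⟨hPB, hrank⟩, hmul, hstar⟩
    refine ⟨(Tof α, gof α), ?_, (proj_eq_projDgm hPB hmul hstar).symm⟩
    rw [Finset.mem_coe, mem_QF]
    refine ⟨?_, gof_invol hPB, fun i hi => gof_fix hPB hi⟩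
    have : prank α = (Tof α).card := by
      rw [prank, domSet_eq_Tof hPB hmul hstar, Set.ncard_coe_finset]
    rw [← this]; exact hrank
  · rintro ⟨p, hp, rfl⟩
    rw [Finset.mem_coe, mem_QF] at hp
    exact projDgm_mem hp.2.1 hp.2.2 hp.1

lemma Phi_injOn (r : ℕ) :
    Set.InjOn (fun p : (Finset (Fin n)) × (Fin n → Fin n) => projDgm p.1 p.2)
      ↑(QF n r) := by
  intro p hp q hq heq
  rw [Finset.mem_coe, mem_QF] at hp hq
  obtain ⟨hpc, hpg, hpT⟩ := hp
  obtain ⟨hqc, hqg, hqT⟩ := hq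
  simp only at heq
  have hr : ∀ x y : PBV n, pf p.1 p.2 x = pf p.1 p.2 y ↔ pf q.1 q.2 x = pf q.1 q.2 y := by
    intro x y
    have : (projDgm p.1 p.2).r x y ↔ (projDgm q.1 q.2).r x y := by rw [heq]
    exact this
  have hT : p.1 = q.1 := by
    ext i
    have h1 : i ∈ p.1 ↔ pf p.1 p.2 (Sum.inl i) = pf p.1 p.2 (Sum.inr i) := by
      rw [pf_inl_inr]
      exact ⟨fun h => ⟨h, rfl⟩, fun h => h.1⟩
    have h2 : i ∈ q.1 ↔ pf q.1 q.2 (Sum.inl i) = pf q.1 q.2 (Sum.inr i) := by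
      rw [pf_inl_inr]
      exact ⟨fun h => ⟨h, rfl⟩, fun h => h.1⟩
    rw [h1, h2, hr]
  have hg : p.2 = q.2 := by
    funext i
    by_cases h1 : p.2 i = i
    · by_cases h2 : q.2 i = i
      · rw [h1, h2]
      · exfalso
        have hnot : i ∉ q.1 := fun hi => h2 (hqT i hi)
        have hrel : pf q.1 q.2 (Sum.inl i) = pf q.1 q.2 (Sum.inl (q.2 i)) :=
          (pf_inl_inl hqg hqT).mpr (Or.inr ⟨hnot, h2, rfl⟩)
        rw [← hr] at hrel
        rcases (pf_inl_inl hpg hpT).mp hrel with hc | ⟨_, _, hc⟩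
        · exact h2 hc
        · rw [h1] at hc; exact h2 hc
    · have hnot : i ∉ p.1 := fun hi => h1 (hpT i hi)
      have hrel : pf p.1 p.2 (Sum.inl i) = pf p.1 p.2 (Sum.inl (p.2 i)) :=
        (pf_inl_inl hpg hpT).mpr (Or.inr ⟨hnot, h1, rfl⟩)
      rw [hr] at hrel
      rcases (pf_inl_inl hqg hqT).mp hrel with hc | ⟨_, _, hc⟩
      · exact absurd hc h1
      · exact hc
  exact Prod.ext hT hg

lemma QF_card (r : ℕ) : (QF n r).card = Nat.choose n r * aSeq (n - r) := by
  rw [Finset.card_eq_sum_card_fiberwise (f := Prod.fst)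
    (t := Finset.powersetCard r Finset.univ)
    (fun p hp => Finset.mem_powersetCard_univ.mpr ((mem_QF.mp hp).1))]
  have hfib : ∀ T ∈ Finset.powersetCard r (Finset.univ : Finset (Fin n)),
      ((QF n r).filter (fun p => p.1 = T)).card = aSeq (n - r) := by
    intro T hT
    have hTc : T.card = r := Finset.mem_powersetCard_univ.mp hT
    have hbij : ((QF n r).filter (fun p => p.1 = T)).card = (JF Tᶜ).card := by
      apply Finset.card_nbij' (i := fun p => p.2) (j := fun g => (T, g))
      · intro p hp
        rw [Finset.mem_coe, Finset.mem_filter, mem_QF] at hp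
        obtain ⟨⟨hc, hinv, hfix⟩, hfst⟩ := hp
        rw [Finset.mem_coe, mem_JF]
        refine ⟨hinv, fun x hx => ?_⟩
        have hxT : x ∈ T := by
          by_contra hxT
          exact hx (Finset.mem_compl.mpr hxT)
        exact hfix x (hfst ▸ hxT)
      · intro g hg
        rw [Finset.mem_coe, mem_JF] at hg
        rw [Finset.mem_coe, Finset.mem_filter, mem_QF]
        exact ⟨⟨hTc, hg.1, fun i hi => hg.2 i (fun hc => Finset.mem_compl.mp hc hi)⟩, rfl⟩
      · intro p hp
        rw [Finset.mem_coe, Finset.mem_filter] at hp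
        exact Prod.ext hp.2.symm rfl
      · intro g hg
        rfl
    rw [hbij]
    refine JF_card (n - r) _ ?_
    rw [Finset.card_compl, Fintype.card_fin, hTc]
  rw [Finset.sum_congr rfl hfib, Finset.sum_const, Finset.card_powersetCard,
    Finset.card_univ, Fintype.card_fin, smul_eq_mul]

end PBProof

/-- For `0 ≤ r ≤ n`, the number of projections in `D_r(PB_n)`
equals `C(n,r) · a(n-r)`. -/
theorem numProjectionsDPB (n r : ℕ) (hrn : r ≤ n) :
    Set.ncard {α : Dgm n | α ∈ DPB n r ∧ IsProj α} = Nat.choose n r * aSeq (n - r) := by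
  rw [PBProof.S_eq r, Set.ncard_image_of_injOn (PBProof.Phi_injOn r),
    Set.ncard_coe_finset, PBProof.QF_card r]
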